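/- If p is a polynomial with complex coefficients whose Gaussian expectation vanishes, E(p) = 0, then there exists a polynomial q with complex coefficients such that p = q′ − X·q. Hence the kernel of the Gaussian expectation E on polynomials equals the image of the map q ↦ q′ − X·q. -/

import Mathlib

open Polynomial MeasureTheory Filter Real

-- algebra lemma
lemma exists_rep : ∀ (n : ℕ) (p : Polynomial ℂ), p.natDegree ≤ n →
    ∃ (q : Polynomial ℂ) (c : ℂ), p = derivative q - X * q + C c := by
  intro n
  induction n with
  | zero =>
    intro p hp
    exact ⟨0, p.coeff 0, by simp [← Polynomial.eq_C_of_natDegree_le_zero hp]⟩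
  | succ n ih =>
    intro p hp
    set a := p.coeff (n+1) with ha
    set w : Polynomial ℂ := -(C a * X ^ n) with hw
    have hTw : derivative w - X * w = C a * X ^ (n+1) - C (a * (n:ℂ)) * X ^ (n-1) := by
      simp [hw, derivative_X_pow, pow_succ, C_mul]
      ring
    have key : (p - (derivative w - X * w)).natDegree ≤ n := by
      rw [natDegree_le_iff_coeff_eq_zero]
      intro N hN
      rw [hTw]
      simp only [coeff_sub, coeff_C_mul, coeff_X_pow, mul_ite, mul_one, mul_zero]
      rcases eq_or_lt_of_le (Nat.succ_le_of_lt hN) with h | h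
      · rw [if_pos h.symm, if_neg (by omega)]
        simp [← h, ← ha]
      · rw [if_neg (by omega), if_neg (by omega),
          coeff_eq_zero_of_natDegree_lt (lt_of_le_of_lt hp h)]
        ring
    obtain ⟨q, c, hqc⟩ := ih _ key
    refine ⟨w + q, c, ?_⟩
    rw [derivative_add]
    linear_combination hqc

lemma pow_le_factorial_mul_exp {x : ℝ} (hx : 0 ≤ x) (n : ℕ) :
    x ^ n ≤ n.factorial * Real.exp x := by
  have h := Real.sum_le_exp_of_nonneg hx (n + 1)
  have h2 : x ^ n / n.factorial ≤ Real.exp x :=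
    le_trans (Finset.single_le_sum (f := fun i => x ^ i / i.factorial)
      (fun i _ => by positivity) (Finset.self_mem_range_succ n)) h
  rw [div_le_iff₀ (by positivity)] at h2
  calc x ^ n ≤ Real.exp x * n.factorial := h2
  _ = n.factorial * Real.exp x := mul_comm _ _

lemma abs_pow_mul_exp_le (n : ℕ) (x : ℝ) :
    |x| ^ n * Real.exp (-x ^ 2 / 2) ≤
      (1 + 4 ^ n * n.factorial) * Real.exp (-(4⁻¹) * x ^ 2) := by
  have hsplit : Real.exp (-x ^ 2 / 2) =
      Real.exp (-(4⁻¹) * x ^ 2) * Real.exp (-(4⁻¹) * x ^ 2) := by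
    rw [← Real.exp_add]; ring_nf
  have key : |x| ^ n * Real.exp (-(4⁻¹) * x ^ 2) ≤ 1 + 4 ^ n * n.factorial := by
    rcases le_or_gt (|x|) 1 with h1 | h1
    · have hp : |x| ^ n ≤ 1 := pow_le_one₀ (abs_nonneg x) h1
      have he : Real.exp (-(4⁻¹) * x ^ 2) ≤ 1 := Real.exp_le_one_iff.mpr (by nlinarith)
      nlinarith [pow_pos (show (0:ℝ) < 4 by norm_num) n,
        (Nat.cast_pos (α := ℝ)).mpr n.factorial_pos,
        Real.exp_nonneg (-(4⁻¹) * x ^ 2), pow_nonneg (abs_nonneg x) n]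
    · have hx2 : |x| ^ n ≤ (x ^ 2) ^ n := by
        apply pow_le_pow_left₀ (abs_nonneg x)
        nlinarith [sq_abs x, abs_nonneg x]
      have h3 := pow_le_factorial_mul_exp (x := 4⁻¹ * x ^ 2) (by positivity) n
      have e1 : (x ^ 2) ^ n ≤ 4 ^ n * (n.factorial * Real.exp (4⁻¹ * x ^ 2)) := by
        calc (x ^ 2) ^ n = 4 ^ n * (4⁻¹ * x ^ 2) ^ n := by
              rw [← mul_pow]; ring_nf
        _ ≤ 4 ^ n * (n.factorial * Real.exp (4⁻¹ * x ^ 2)) := by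
              exact mul_le_mul_of_nonneg_left h3 (by positivity)
      calc |x| ^ n * Real.exp (-(4⁻¹) * x ^ 2)
          ≤ (x ^ 2) ^ n * Real.exp (-(4⁻¹) * x ^ 2) :=
            mul_le_mul_of_nonneg_right hx2 (Real.exp_nonneg _)
        _ ≤ 4 ^ n * (n.factorial * Real.exp (4⁻¹ * x ^ 2)) * Real.exp (-(4⁻¹) * x ^ 2) :=
            mul_le_mul_of_nonneg_right e1 (Real.exp_nonneg _)
        _ = 4 ^ n * n.factorial * (Real.exp (4⁻¹ * x ^ 2) * Real.exp (-(4⁻¹) * x ^ 2)) := by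
            ring
        _ = 4 ^ n * n.factorial := by
            rw [← Real.exp_add, (by ring : 4⁻¹ * x ^ 2 + -(4⁻¹) * x ^ 2 = 0),
              Real.exp_zero, mul_one]
        _ ≤ 1 + 4 ^ n * n.factorial := by linarith
  rw [hsplit, ← mul_assoc]
  exact mul_le_mul_of_nonneg_right key (Real.exp_nonneg _)

lemma integrable_poly (p : Polynomial ℂ) :
    Integrable fun x : ℝ => p.eval (x : ℂ) * ((Real.exp (-x ^ 2 / 2) : ℝ) : ℂ) := by
  induction p using Polynomial.induction_on' with
  | add p q hp hq => simp only [eval_add, add_mul]; exact hp.add hq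
  | monomial i c =>
    simp only [eval_monomial]
    have hmeas : Continuous fun x : ℝ => c * (x : ℂ) ^ i * ((Real.exp (-x ^ 2 / 2) : ℝ) : ℂ) := by
      fun_prop
    refine Integrable.mono'
      (g := fun x => ‖c‖ * ((1 + 4 ^ i * i.factorial) * Real.exp (-(4⁻¹) * x ^ 2)))
      (((integrable_exp_neg_mul_sq (by norm_num : (0:ℝ) < 4⁻¹)).const_mul _).const_mul _)
      hmeas.aestronglyMeasurable (ae_of_all _ fun x => ?_)
    rw [norm_mul, norm_mul, norm_pow, Complex.norm_real, Complex.norm_real,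
      Real.norm_eq_abs, Real.norm_eq_abs, abs_of_pos (Real.exp_pos _), mul_assoc]
    exact mul_le_mul_of_nonneg_left
      (by simpa using abs_pow_mul_exp_le i x) (norm_nonneg c)

lemma hasDerivAt_F (q : Polynomial ℂ) (x : ℝ) :
    HasDerivAt (fun x : ℝ => q.eval (x : ℂ) * ((Real.exp (-x ^ 2 / 2) : ℝ) : ℂ))
      ((derivative q - X * q).eval (x : ℂ) * ((Real.exp (-x ^ 2 / 2) : ℝ) : ℂ)) x := by
  have h1 : HasDerivAt (fun x : ℝ => q.eval (x : ℂ)) (q.derivative.eval (x : ℂ)) x :=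
    (q.hasDerivAt (x : ℂ)).comp_ofReal
  have hin : HasDerivAt (fun x : ℝ => -x ^ 2 / 2) (-x) x := by
    have h := (hasDerivAt_pow 2 x).neg.div_const 2
    refine h.congr_deriv ?_
    push_cast
    ring
  have h2r : HasDerivAt (fun x : ℝ => Real.exp (-x ^ 2 / 2))
      (Real.exp (-x ^ 2 / 2) * (-x)) x := (Real.hasDerivAt_exp _).comp x hin
  have h2 : HasDerivAt (fun x : ℝ => ((Real.exp (-x ^ 2 / 2) : ℝ) : ℂ))
      (((Real.exp (-x ^ 2 / 2) * (-x) : ℝ)) : ℂ) x := h2r.ofReal_comp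
  have h := h1.mul h2
  refine h.congr_deriv ?_
  simp only [eval_sub, eval_mul, eval_X]
  push_cast
  ring

lemma tendsto_aux (i : ℕ) :
    Tendsto (fun x : ℝ => |x| ^ i * Real.exp (-x ^ 2 / 2)) atTop (nhds 0) := by
  refine squeeze_zero' (Filter.Eventually.of_forall fun x => by positivity) ?_
    (tendsto_pow_mul_exp_neg_atTop_nhds_zero i)
  filter_upwards [eventually_ge_atTop (2:ℝ)] with x hx
  rw [abs_of_nonneg (by linarith)]
  exact mul_le_mul_of_nonneg_left (Real.exp_le_exp.mpr (by nlinarith))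
    (by positivity)

lemma tendsto_top (q : Polynomial ℂ) :
    Tendsto (fun x : ℝ => q.eval (x : ℂ) * ((Real.exp (-x ^ 2 / 2) : ℝ) : ℂ))
      atTop (nhds 0) := by
  have hrepr : ∀ x : ℝ, q.eval (x : ℂ) * ((Real.exp (-x ^ 2 / 2) : ℝ) : ℂ) =
      ∑ i ∈ Finset.range (q.natDegree + 1),
        q.coeff i * (x : ℂ) ^ i * ((Real.exp (-x ^ 2 / 2) : ℝ) : ℂ) := by
    intro x
    rw [Polynomial.eval_eq_sum_range, Finset.sum_mul]
  rw [show (0 : ℂ) = ∑ i ∈ Finset.range (q.natDegree + 1), (0:ℂ) by simp]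
  refine Tendsto.congr (fun x => (hrepr x).symm) (tendsto_finset_sum _ fun i _ => ?_)
  have hn := (tendsto_aux i).const_mul ‖q.coeff i‖
  rw [mul_zero] at hn
  refine squeeze_zero_norm (fun x => le_of_eq ?_) hn
  rw [norm_mul, norm_mul, norm_pow, Complex.norm_real, Complex.norm_real,
    Real.norm_eq_abs, Real.norm_eq_abs, abs_of_pos (Real.exp_pos _), mul_assoc]

lemma tendsto_bot (q : Polynomial ℂ) :
    Tendsto (fun x : ℝ => q.eval (x : ℂ) * ((Real.exp (-x ^ 2 / 2) : ℝ) : ℂ))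
      atBot (nhds 0) := by
  have h := tendsto_top (q.comp (-X))
  have heq : (fun x : ℝ => q.eval (x : ℂ) * ((Real.exp (-x ^ 2 / 2) : ℝ) : ℂ)) =
      (fun x : ℝ => (q.comp (-X)).eval (x : ℂ) * ((Real.exp (-x ^ 2 / 2) : ℝ) : ℂ)) ∘
        Neg.neg := by
    funext x
    simp only [Function.comp_apply, eval_comp, eval_neg, eval_X]
    push_cast
    ring_nf
  rw [heq]
  exact h.comp tendsto_neg_atBot_atTop

lemma integral_T (q : Polynomial ℂ) :
    ∫ x : ℝ, (derivative q - X * q).eval (x : ℂ) * ((Real.exp (-x ^ 2 / 2) : ℝ) : ℂ) = 0 := by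
  have h := integral_of_hasDerivAt_of_tendsto (hasDerivAt_F q)
    (integrable_poly (derivative q - X * q)) (tendsto_bot q) (tendsto_top q)
  simpa using h

lemma denom_ne : (∫ x : ℝ, ((Real.exp (-x ^ 2 / 2) : ℝ) : ℂ)) ≠ 0 := by
  have hco : (∫ x : ℝ, ((Real.exp (-x ^ 2 / 2) : ℝ) : ℂ)) =
      ((∫ x : ℝ, Real.exp (-x ^ 2 / 2) : ℝ) : ℂ) := integral_ofReal
  rw [hco, Complex.ofReal_ne_zero]
  have h : ∫ x : ℝ, Real.exp (-x ^ 2 / 2) = Real.sqrt (π / (1/2)) := by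
    rw [← integral_gaussian]
    congr 1
    funext x
    ring_nf
  rw [h]
  positivity

noncomputable def gaussianExpectation (p : Polynomial ℂ) : ℂ :=
  (∫ x : ℝ, p.eval (x : ℂ) * Real.exp (-x ^ 2 / 2)) /
    (∫ x : ℝ, (Real.exp (-x ^ 2 / 2) : ℂ))

lemma gaussianExpectation_T (q : Polynomial ℂ) :
    gaussianExpectation (derivative q - X * q) = 0 := by
  unfold gaussianExpectation
  rw [integral_T q, zero_div]

theorem gaussian_expectation_kernel_eq_image :
    (∀ p : Polynomial ℂ, gaussianExpectation p = 0 →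
      ∃ q : Polynomial ℂ, p = derivative q - X * q) ∧
    {p : Polynomial ℂ | gaussianExpectation p = 0} =
      Set.range (fun q : Polynomial ℂ => derivative q - X * q) := by
  have main : ∀ p : Polynomial ℂ, gaussianExpectation p = 0 →
      ∃ q : Polynomial ℂ, p = derivative q - X * q := by
    intro p hp
    obtain ⟨q, c, rfl⟩ := exists_rep p.natDegree p le_rfl
    have hsum : (∫ x : ℝ, (derivative q - X * q + C c).eval (x : ℂ) *
          ((Real.exp (-x ^ 2 / 2) : ℝ) : ℂ)) =
        (∫ x : ℝ, (derivative q - X * q).eval (x : ℂ) * ((Real.exp (-x ^ 2 / 2) : ℝ) : ℂ)) +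
        ∫ x : ℝ, (C c).eval (x : ℂ) * ((Real.exp (-x ^ 2 / 2) : ℝ) : ℂ) := by
      simp_rw [eval_add, add_mul]
      exact integral_add (integrable_poly _) (integrable_poly _)
    have hc : (∫ x : ℝ, (C c).eval (x : ℂ) * ((Real.exp (-x ^ 2 / 2) : ℝ) : ℂ)) =
        c * ∫ x : ℝ, ((Real.exp (-x ^ 2 / 2) : ℝ) : ℂ) := by
      simp only [eval_C]
      exact integral_const_mul c _
    unfold gaussianExpectation at hp
    rw [hsum, integral_T q, zero_add, hc, mul_div_assoc, div_self denom_ne, mul_one] at hp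
    refine ⟨q, ?_⟩
    rw [hp]
    simp
  refine ⟨main, ?_⟩
  ext p
  simp only [Set.mem_setOf_eq, Set.mem_range]
  constructor
  · intro hp
    obtain ⟨q, hq⟩ := main p hp
    exact ⟨q, hq.symm⟩
  · rintro ⟨q, rfl⟩
    exact gaussianExpectation_T q
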